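/- For every integer t ≥ 3 there exists a function f : ℕ → ℕ with the following property: for every finite simple graph G = (V, E) that is K_{3,t}-forbidden and every two independent sets I_0 and I_r of G with |I_0| = |I_r| = k, there exists a vertex set V' with I_0 ∪ I_r ⊆ V' ⊆ V and |V'| ≤ f(k) such that there is a token-jumping reconfiguration sequence from I_0 to I_r in G if and only if there is one in the subgraph of G induced on V'. -/

import Mathlib

/-- `I` is an independent set of `G` (as a finset of vertices). -/
def IsIndepFinset {V : Type*} (G : SimpleGraph V) (I : Finset V) : Prop :=
  ∀ u ∈ I, ∀ v ∈ I, ¬ G.Adj u v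

/-- One token jump: exactly one token moves from `u ∈ I` to `v ∉ I`. -/
def TJStep {V : Type*} [DecidableEq V] (I J : Finset V) : Prop :=
  ∃ u v, u ∈ I ∧ v ∉ I ∧ I \ J = {u} ∧ J \ I = {v}

/-- `f 0, f 1, …, f ℓ` is a token-jumping reconfiguration sequence from `I` to `J`
in `G`, all of whose members are independent sets of cardinality `k`. -/
def TJSeq {V : Type*} [DecidableEq V] (G : SimpleGraph V) (k : ℕ)
    (I J : Finset V) (ℓ : ℕ) (f : ℕ → Finset V) : Prop :=
  f 0 = I ∧ f ℓ = J ∧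
  (∀ i ≤ ℓ, IsIndepFinset G (f i) ∧ (f i).card = k) ∧
  (∀ i < ℓ, TJStep (f i) (f (i + 1)))

/-- There is a token-jumping reconfiguration sequence from `I` to `J` in `G`. -/
def TJReachable {V : Type*} [DecidableEq V] (G : SimpleGraph V) (k : ℕ)
    (I J : Finset V) : Prop :=
  ∃ ℓ f, TJSeq G k I J ℓ f

/-- There is a token-jumping reconfiguration sequence from `I` to `J` in the
subgraph of `G` induced on the vertex set `W` (equivalently: a sequence in `G`
all of whose members are contained in `W`). -/
def TJReachableWithin {V : Type*} [DecidableEq V] (G : SimpleGraph V) (k : ℕ)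
    (I J : Finset V) (W : Finset V) : Prop :=
  ∃ ℓ f, TJSeq G k I J ℓ f ∧ ∀ i ≤ ℓ, f i ⊆ W

/-- `G` contains the complete bipartite graph `K_{p,q}` as a subgraph. -/
def ContainsKpq {V : Type*} (G : SimpleGraph V) (p q : ℕ) : Prop :=
  ∃ X Y : Finset V, Disjoint X Y ∧ X.card = p ∧ Y.card = q ∧
    ∀ x ∈ X, ∀ y ∈ Y, G.Adj x y

set_option linter.unusedSectionVars false

section
variable {V : Type*} [DecidableEq V] {G : SimpleGraph V} {k : ℕ}

namespace TJAux

theorem indep_subset {I J : Finset V} (h : IsIndepFinset G I) (hJI : J ⊆ I) :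
    IsIndepFinset G J := fun u hu v hv => h u (hJI hu) v (hJI hv)

theorem tjstep_symm {I J : Finset V} (h : TJStep I J) : TJStep J I := by
  obtain ⟨u, v, hu, hv, hIJ, hJI⟩ := h
  refine ⟨v, u, ?_, ?_, hJI, hIJ⟩
  · have : v ∈ J \ I := by rw [hJI]; exact Finset.mem_singleton_self v
    exact (Finset.mem_sdiff.1 this).1
  · have : u ∈ I \ J := by rw [hIJ]; exact Finset.mem_singleton_self u
    exact (Finset.mem_sdiff.1 this).2

theorem tjrw_mono {I J W W' : Finset V} (hW : W ⊆ W')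
    (h : TJReachableWithin G k I J W) : TJReachableWithin G k I J W' := by
  obtain ⟨ℓ, f, hs, hw⟩ := h
  exact ⟨ℓ, f, hs, fun i hi => (hw i hi).trans hW⟩

theorem tjrw_refl {I : Finset V} (h1 : IsIndepFinset G I) (h2 : I.card = k) :
    TJReachableWithin G k I I I :=
  ⟨0, fun _ => I, ⟨rfl, rfl, fun _ _ => ⟨h1, h2⟩, fun i hi => absurd hi (Nat.not_lt_zero i)⟩,
    fun _ _ => le_refl _⟩

theorem tjrw_step {I J : Finset V} (h : TJStep I J)
    (hI1 : IsIndepFinset G I) (hI2 : I.card = k)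
    (hJ1 : IsIndepFinset G J) (hJ2 : J.card = k) :
    TJReachableWithin G k I J (I ∪ J) := by
  refine ⟨1, fun i => if i = 0 then I else J, ⟨rfl, rfl, ?_, ?_⟩, ?_⟩
  · intro i _
    by_cases hi : i = 0 <;> simp [hi, hI1, hI2, hJ1, hJ2]
  · intro i hi
    interval_cases i
    simpa using h
  · intro i _
    by_cases hi : i = 0 <;> simp [hi, Finset.subset_union_left, Finset.subset_union_right]

theorem tjrw_trans {I J K W₁ W₂ : Finset V}
    (h1 : TJReachableWithin G k I J W₁) (h2 : TJReachableWithin G k J K W₂) :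
    TJReachableWithin G k I K (W₁ ∪ W₂) := by
  obtain ⟨ℓ₁, f₁, ⟨he0, he1, hc1, hstep1⟩, hw1⟩ := h1
  obtain ⟨ℓ₂, f₂, ⟨hf0, hf1, hc2, hstep2⟩, hw2⟩ := h2
  refine ⟨ℓ₁ + ℓ₂, fun i => if i < ℓ₁ then f₁ i else f₂ (i - ℓ₁), ⟨?_, ?_, ?_, ?_⟩, ?_⟩
  case _ =>
    by_cases h : 0 < ℓ₁
    · simp [h, he0]
    · have hl : ℓ₁ = 0 := by omega
      simp [hl, hf0, ← he1, hl, he0]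
  case _ =>
    have : ¬ (ℓ₁ + ℓ₂ < ℓ₁) := by omega
    simp [this, hf1]
  case _ =>
    intro i hi
    by_cases h : i < ℓ₁
    · simp only [h, if_pos]
      exact hc1 i (le_of_lt h)
    · simp only [h, if_neg, if_false]
      exact hc2 (i - ℓ₁) (by omega)
  case _ =>
    intro i hi
    by_cases h : i + 1 < ℓ₁
    · have h' : i < ℓ₁ := by omega
      simp only [h, h', if_pos]
      exact hstep1 i h'
    · by_cases h' : i < ℓ₁
      · -- i + 1 = ℓ₁
        have hEq : i + 1 = ℓ₁ := by omega
        have : f₂ ((i+1) - ℓ₁) = f₁ (i+1) := by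
          rw [hEq]; simp [hf0, ← he1]
        simp only [h, h', if_pos, if_neg, if_false]
        rw [this]
        exact hstep1 i h'
      · have hne : ¬ (i + 1 < ℓ₁) := h
        simp only [h', hne, if_neg, if_false]
        have : i + 1 - ℓ₁ = (i - ℓ₁) + 1 := by omega
        rw [this]
        exact hstep2 (i - ℓ₁) (by omega)
  case _ =>
    intro i hi
    by_cases h : i < ℓ₁
    · simp only [h, if_pos]
      exact (hw1 i (le_of_lt h)).trans Finset.subset_union_left
    · simp only [h, if_neg, if_false]
      exact (hw2 (i - ℓ₁) (by omega)).trans Finset.subset_union_right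

theorem tjseq_rev {I J : Finset V} {ℓ : ℕ} {f : ℕ → Finset V}
    (h : TJSeq G k I J ℓ f) : TJSeq G k J I ℓ (fun i => f (ℓ - i)) := by
  obtain ⟨h0, h1, hc, hstep⟩ := h
  refine ⟨by simp [h1], by simp [h0], fun i _ => hc (ℓ - i) (by omega), ?_⟩
  intro i hi
  have e1 : ℓ - i = (ℓ - (i+1)) + 1 := by omega
  have := tjstep_symm (hstep (ℓ - (i+1)) (by omega))
  simpa [← e1] using this

theorem tjrw_symm {I J W : Finset V} (h : TJReachableWithin G k I J W) :
    TJReachableWithin G k J I W := by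
  obtain ⟨ℓ, f, hs, hw⟩ := h
  exact ⟨ℓ, fun i => f (ℓ - i), tjseq_rev hs, fun i _ => hw (ℓ - i) (by omega)⟩

theorem tjseq_prefix {I J : Finset V} {ℓ : ℕ} {f : ℕ → Finset V}
    (h : TJSeq G k I J ℓ f) {m : ℕ} (hm : m ≤ ℓ) : TJSeq G k I (f m) m f := by
  obtain ⟨h0, h1, hc, hstep⟩ := h
  exact ⟨h0, rfl, fun i hi => hc i (le_trans hi hm), fun i hi => hstep i (by omega)⟩

end TJAux
end

section
open Finset
variable {V : Type*} [Fintype V] [DecidableEq V] {G : SimpleGraph V} [DecidableRel G.Adj] {k t : ℕ}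

namespace TJAux

theorem tjstep_swap {J : Finset V} {y c : V} (hy : y ∈ J) (hc : c ∉ J) :
    TJStep J (insert c (J.erase y)) := by
  have hcy : c ≠ y := fun h => hc (h ▸ hy)
  refine ⟨y, c, hy, hc, ?_, ?_⟩
  · ext x
    simp only [Finset.mem_sdiff, Finset.mem_insert, Finset.mem_erase, Finset.mem_singleton]
    constructor
    · rintro ⟨hxJ, hn⟩
      by_contra hxy
      exact hn (Or.inr ⟨hxy, hxJ⟩)
    · rintro rfl
      refine ⟨hy, ?_⟩
      rintro (h | ⟨h1, _⟩)
      · exact hcy h.symm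
      · exact h1 rfl
  · ext x
    simp only [Finset.mem_sdiff, Finset.mem_insert, Finset.mem_erase, Finset.mem_singleton]
    constructor
    · rintro ⟨h1 | ⟨h1, h2⟩, hxJ⟩
      · exact h1
      · exact (hxJ h2).elim
    · rintro rfl
      exact ⟨Or.inl rfl, hc⟩

theorem swap_card {J : Finset V} {y c : V} (hy : y ∈ J) (hc : c ∉ J) :
    (insert c (J.erase y)).card = J.card := by
  have : c ∉ J.erase y := fun h => hc (Finset.mem_of_mem_erase h)
  rw [Finset.card_insert_of_notMem this, Finset.card_erase_of_mem hy]
  have := Finset.card_pos.2 ⟨y, hy⟩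
  omega

theorem tjstep_erase {I J : Finset V} {h : V} (hI : h ∈ I) (hJ : h ∈ J)
    (st : TJStep I J) : TJStep (I.erase h) (J.erase h) := by
  obtain ⟨u, v, hu, hv, hIJ, hJI⟩ := st
  have huJ : u ∉ J := by
    have : u ∈ I \ J := by rw [hIJ]; exact Finset.mem_singleton_self u
    exact (Finset.mem_sdiff.1 this).2
  have hvJ : v ∈ J := by
    have : v ∈ J \ I := by rw [hJI]; exact Finset.mem_singleton_self v
    exact (Finset.mem_sdiff.1 this).1
  have e1 : I.erase h \ J.erase h = I \ J := by
    ext x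
    simp only [Finset.mem_sdiff, Finset.mem_erase]
    constructor
    · rintro ⟨⟨hxh, hxI⟩, hn⟩
      exact ⟨hxI, fun hxJ => hn ⟨hxh, hxJ⟩⟩
    · rintro ⟨hxI, hxJ⟩
      exact ⟨⟨fun e => hxJ (e ▸ hJ), hxI⟩, fun ⟨_, h2⟩ => hxJ h2⟩
  have e2 : J.erase h \ I.erase h = J \ I := by
    ext x
    simp only [Finset.mem_sdiff, Finset.mem_erase]
    constructor
    · rintro ⟨⟨hxh, hxI⟩, hn⟩
      exact ⟨hxI, fun hxJ => hn ⟨hxh, hxJ⟩⟩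
    · rintro ⟨hxI, hxJ⟩
      exact ⟨⟨fun e => hxJ (e ▸ hI), hxI⟩, fun ⟨_, h2⟩ => hxJ h2⟩
  exact ⟨u, v, Finset.mem_erase.2 ⟨fun e => huJ (e ▸ hJ), hu⟩,
    fun hmem => hv (Finset.mem_of_mem_erase hmem), e1 ▸ hIJ, e2 ▸ hJI⟩

theorem tjstep_insert {I J : Finset V} {h : V} (hI : h ∉ I) (hJ : h ∉ J)
    (st : TJStep I J) : TJStep (insert h I) (insert h J) := by
  obtain ⟨u, v, hu, hv, hIJ, hJI⟩ := st
  have hvJ : v ∈ J := by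
    have : v ∈ J \ I := by rw [hJI]; exact Finset.mem_singleton_self v
    exact (Finset.mem_sdiff.1 this).1
  have e1 : insert h I \ insert h J = I \ J := by
    ext x
    simp only [Finset.mem_sdiff, Finset.mem_insert]
    constructor
    · rintro ⟨hx1 | hx1, hn⟩
      · exact absurd (Or.inl hx1) hn
      · exact ⟨hx1, fun hxJ => hn (Or.inr hxJ)⟩
    · rintro ⟨hxI, hxJ⟩
      exact ⟨Or.inr hxI, fun hor => by
        rcases hor with rfl | hh
        · exact hI hxI
        · exact hxJ hh⟩
  have e2 : insert h J \ insert h I = J \ I := by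
    ext x
    simp only [Finset.mem_sdiff, Finset.mem_insert]
    constructor
    · rintro ⟨hx1 | hx1, hn⟩
      · exact absurd (Or.inl hx1) hn
      · exact ⟨hx1, fun hxJ => hn (Or.inr hxJ)⟩
    · rintro ⟨hxI, hxJ⟩
      exact ⟨Or.inr hxI, fun hor => by
        rcases hor with rfl | hh
        · exact hJ hxI
        · exact hxJ hh⟩
  exact ⟨u, v, Finset.mem_insert_of_mem hu,
    fun hmem => by
      rcases Finset.mem_insert.1 hmem with rfl | hh
      · exact hJ hvJ
      · exact hv hh,
    e1 ▸ hIJ, e2 ▸ hJI⟩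

theorem tjseq_erase {I J : Finset V} {ℓ k' : ℕ} {f : ℕ → Finset V} {h : V}
    (hs : TJSeq G (k' + 1) I J ℓ f) (hh : ∀ i ≤ ℓ, h ∈ f i) :
    TJSeq G k' (I.erase h) (J.erase h) ℓ (fun i => (f i).erase h) := by
  obtain ⟨h0, h1, hc, hstep⟩ := hs
  refine ⟨by show (f 0).erase h = I.erase h; rw [h0], by show (f ℓ).erase h = J.erase h; rw [h1], ?_, ?_⟩
  · intro i hi
    refine ⟨indep_subset (hc i hi).1 (Finset.erase_subset _ _), ?_⟩
    rw [Finset.card_erase_of_mem (hh i hi), (hc i hi).2]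
    omega
  · intro i hi
    exact tjstep_erase (hh i (le_of_lt hi)) (hh (i+1) hi) (hstep i hi)

theorem tjrw_insert {R R' W : Finset V} {k' : ℕ} {h : V}
    (hW : ∀ w ∈ W, ¬ G.Adj h w ∧ w ≠ h)
    (hr : TJReachableWithin G k' R R' W) :
    TJReachableWithin G (k' + 1) (insert h R) (insert h R') (insert h W) := by
  obtain ⟨ℓ, f, ⟨h0, h1, hc, hstep⟩, hw⟩ := hr
  have hnot : ∀ i ≤ ℓ, h ∉ f i := fun i hi hmem => (hW h (hw i hi hmem)).2 rfl
  refine ⟨ℓ, fun i => insert h (f i), ⟨by show insert h (f 0) = _; rw [h0], by show insert h (f ℓ) = _; rw [h1], ?_, ?_⟩, ?_⟩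
  · intro i hi
    constructor
    · intro a ha b hb
      rcases Finset.mem_insert.1 ha with rfl | ha' <;>
        rcases Finset.mem_insert.1 hb with rfl | hb'
      · exact fun hadj => G.loopless.irrefl _ hadj
      · exact (hW b (hw i hi hb')).1
      · exact fun hadj => (hW a (hw i hi ha')).1 hadj.symm
      · exact (hc i hi).1 a ha' b hb'
    · rw [Finset.card_insert_of_notMem (hnot i hi), (hc i hi).2]
  · intro i hi
    exact tjstep_insert (hnot i (le_of_lt hi)) (hnot (i+1) hi) (hstep i hi)
  · intro i hi
    exact Finset.insert_subset_insert _ (hw i hi)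

theorem greedy (D : ℕ) : ∀ (m : ℕ) (A : Finset V),
    (∀ a ∈ A, (G.neighborFinset a ∩ A).card ≤ D) → m * (D + 1) ≤ A.card →
    ∃ C, C ⊆ A ∧ IsIndepFinset G C ∧ C.card = m := by
  intro m
  induction m with
  | zero =>
    intro A _ _
    exact ⟨∅, Finset.empty_subset _, fun u hu => absurd hu (Finset.notMem_empty u), rfl⟩
  | succ m ih =>
    intro A hdeg hcard
    have hApos : 0 < A.card := by
      have : 0 < (m+1) * (D+1) := by positivity
      omega
    obtain ⟨a, ha⟩ := Finset.card_pos.1 hApos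
    set A' := (A.erase a) \ (G.neighborFinset a) with hA'
    have hA'sub : A' ⊆ A := (Finset.sdiff_subset).trans (Finset.erase_subset _ _)
    have hA'card : m * (D + 1) ≤ A'.card := by
      have h1 : (A.erase a).card = A.card - 1 := Finset.card_erase_of_mem ha
      have h2 : A.erase a ⊆ A' ∪ (G.neighborFinset a ∩ A) := by
        intro x hx
        by_cases hxn : x ∈ G.neighborFinset a
        · exact Finset.mem_union_right _ (Finset.mem_inter.2 ⟨hxn, Finset.mem_of_mem_erase hx⟩)
        · exact Finset.mem_union_left _ (Finset.mem_sdiff.2 ⟨hx, hxn⟩)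
      have h3 := (Finset.card_le_card h2).trans (Finset.card_union_le _ _)
      have h4 := hdeg a ha
      have hexp : (m+1)*(D+1) = m*(D+1) + (D+1) := by ring
      omega
    obtain ⟨C', hC'sub, hC'ind, hC'card⟩ := ih A' (fun b hb =>
      le_trans (Finset.card_le_card (Finset.inter_subset_inter (le_refl _) hA'sub)) (hdeg b (hA'sub hb))) hA'card
    have haC' : a ∉ C' := fun hmem => by
      have := hC'sub hmem
      rw [hA'] at this
      exact (Finset.notMem_erase a A) (Finset.mem_sdiff.1 this).1
    refine ⟨insert a C', Finset.insert_subset ha (hC'sub.trans hA'sub), ?_, ?_⟩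
    · intro u hu v hv
      rcases Finset.mem_insert.1 hu with rfl | hu' <;>
        rcases Finset.mem_insert.1 hv with rfl | hv'
      · exact fun hadj => G.loopless.irrefl _ hadj
      · intro hadj
        have := hC'sub hv'
        rw [hA'] at this
        exact (Finset.mem_sdiff.1 this).2 ((SimpleGraph.mem_neighborFinset _ _ _).2 hadj)
      · intro hadj
        have := hC'sub hu'
        rw [hA'] at this
        exact (Finset.mem_sdiff.1 this).2 ((SimpleGraph.mem_neighborFinset _ _ _).2 hadj.symm)
      · exact hC'ind u hu' v hv'
    · rw [Finset.card_insert_of_notMem haC', hC'card]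

end TJAux
end

section
open Finset
variable {V : Type*} [Fintype V] [DecidableEq V] {G : SimpleGraph V} [DecidableRel G.Adj] {k t : ℕ}

namespace TJAux

theorem flood {C X : Finset V} {d k : ℕ}
    (hCind : IsIndepFinset G C)
    (hCX : ∀ c ∈ C, c ∉ X)
    (hdeg : ∀ w, w ∉ X → (G.neighborFinset w ∩ C).card ≤ d)
    (hsize : k * d + 2 * k < C.card) :
    ∀ n (J : Finset V), (J \ C).card ≤ n → IsIndepFinset G J → J.card = k →
      (∀ x ∈ J, x ∉ X) →
      ∃ F, F ⊆ C ∧ F.card = k ∧ TJReachableWithin G k J F (J ∪ C) := by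
  intro n
  induction n with
  | zero =>
    intro J hJn hJind hJcard _
    have hJC : J ⊆ C := by
      rw [← Finset.sdiff_eq_empty_iff_subset]
      exact Finset.card_eq_zero.1 (Nat.le_zero.1 hJn)
    exact ⟨J, hJC, hJcard, tjrw_mono Finset.subset_union_left (tjrw_refl hJind hJcard)⟩
  | succ n ih =>
    intro J hJn hJind hJcard hJX
    by_cases hJC : J ⊆ C
    · exact ⟨J, hJC, hJcard, tjrw_mono Finset.subset_union_left (tjrw_refl hJind hJcard)⟩
    obtain ⟨y, hy⟩ := Finset.sdiff_nonempty.2 hJC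
    have hyJ : y ∈ J := (Finset.mem_sdiff.1 hy).1
    have hyC : y ∉ C := (Finset.mem_sdiff.1 hy).2
    set Bad := C ∩ (J ∪ (J.erase y).biUnion (fun w => G.neighborFinset w)) with hBadDef
    have hBadcard : Bad.card ≤ k + k * d := by
      have e1 : Bad = (C ∩ J) ∪ (C ∩ (J.erase y).biUnion (fun w => G.neighborFinset w)) :=
        Finset.inter_union_distrib_left _ _ _
      have e2 : (C ∩ J).card ≤ k := by
        calc (C ∩ J).card ≤ J.card := Finset.card_le_card Finset.inter_subset_right
        _ = k := hJcard
      have e3 : C ∩ (J.erase y).biUnion (fun w => G.neighborFinset w)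
          ⊆ (J.erase y).biUnion (fun w => G.neighborFinset w ∩ C) := by
        intro x hx
        obtain ⟨hxC, hxB⟩ := Finset.mem_inter.1 hx
        obtain ⟨w, hw, hxw⟩ := Finset.mem_biUnion.1 hxB
        exact Finset.mem_biUnion.2 ⟨w, hw, Finset.mem_inter.2 ⟨hxw, hxC⟩⟩
      have e4 : ((J.erase y).biUnion (fun w => G.neighborFinset w ∩ C)).card
          ≤ (J.erase y).card * d := by
        refine le_trans (Finset.card_biUnion_le) ?_
        have : ∀ w ∈ J.erase y, (G.neighborFinset w ∩ C).card ≤ d := fun w hw =>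
          hdeg w (hJX w (Finset.mem_of_mem_erase hw))
        calc ∑ w ∈ J.erase y, (G.neighborFinset w ∩ C).card
            ≤ ∑ _w ∈ J.erase y, d := Finset.sum_le_sum this
          _ = (J.erase y).card * d := by rw [Finset.sum_const, smul_eq_mul]
      have e5 : (J.erase y).card ≤ k := by
        calc (J.erase y).card ≤ J.card := Finset.card_le_card (Finset.erase_subset _ _)
        _ = k := hJcard
      have e6 := Finset.card_union_le (C ∩ J)
        (C ∩ (J.erase y).biUnion (fun w => G.neighborFinset w))
      have e7 := Finset.card_le_card e3
      have e8 : (J.erase y).card * d ≤ k * d := Nat.mul_le_mul_right d e5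
      rw [e1]
      omega
    have hfree : (C \ Bad).Nonempty := by
      rw [← Finset.card_pos]
      have h2 : (C \ Bad).card + Bad.card = C.card :=
        Finset.card_sdiff_add_card_eq_card Finset.inter_subset_left
      omega
    obtain ⟨c, hc⟩ := hfree
    have hcC : c ∈ C := (Finset.mem_sdiff.1 hc).1
    have hcBad : c ∉ Bad := (Finset.mem_sdiff.1 hc).2
    have hcJ : c ∉ J := fun hmem => hcBad (Finset.mem_inter.2 ⟨hcC, Finset.mem_union_left _ hmem⟩)
    have hcN : ∀ w ∈ J.erase y, ¬ G.Adj w c := by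
      intro w hw hadj
      exact hcBad (Finset.mem_inter.2 ⟨hcC, Finset.mem_union_right _
        (Finset.mem_biUnion.2 ⟨w, hw, (SimpleGraph.mem_neighborFinset _ _ _).2 hadj⟩)⟩)
    set J' := insert c (J.erase y) with hJ'def
    have hJ'card : J'.card = k := by rw [hJ'def, swap_card hyJ hcJ, hJcard]
    have hJ'ind : IsIndepFinset G J' := by
      intro a ha b hb
      rcases Finset.mem_insert.1 ha with rfl | ha' <;>
        rcases Finset.mem_insert.1 hb with rfl | hb'
      · exact fun hadj => G.loopless.irrefl _ hadj
      · exact fun hadj => hcN b hb' hadj.symm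
      · exact fun hadj => hcN a ha' hadj
      · exact hJind a (Finset.mem_of_mem_erase ha') b (Finset.mem_of_mem_erase hb')
    have hJ'X : ∀ x ∈ J', x ∉ X := by
      intro x hx
      rcases Finset.mem_insert.1 hx with rfl | hx'
      · exact hCX x hcC
      · exact hJX x (Finset.mem_of_mem_erase hx')
    have hmeas : (J' \ C).card ≤ n := by
      have e1 : J' \ C = (J \ C).erase y := by
        ext x
        simp only [hJ'def, Finset.mem_sdiff, Finset.mem_insert, Finset.mem_erase]
        constructor
        · rintro ⟨rfl | ⟨hxy, hxJ⟩, hxC⟩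
          · exact (hxC hcC).elim
          · exact ⟨hxy, hxJ, hxC⟩
        · rintro ⟨hxy, hxJ, hxC⟩
          exact ⟨Or.inr ⟨hxy, hxJ⟩, hxC⟩
      have e2 : y ∈ J \ C := hy
      rw [e1, Finset.card_erase_of_mem e2]
      omega
    obtain ⟨F, hFC, hFcard, hTJ⟩ := ih J' hmeas hJ'ind hJ'card hJ'X
    have hstep : TJReachableWithin G k J J' (J ∪ J') :=
      tjrw_step (tjstep_swap hyJ hcJ) hJind hJcard hJ'ind hJ'card
    refine ⟨F, hFC, hFcard, tjrw_mono ?_ (tjrw_trans hstep hTJ)⟩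
    have hJ'sub : J' ⊆ J ∪ C := by
      intro x hx
      rcases Finset.mem_insert.1 hx with rfl | hx'
      · exact Finset.mem_union_right _ hcC
      · exact Finset.mem_union_left _ (Finset.mem_of_mem_erase hx')
    intro x hx
    rcases Finset.mem_union.1 hx with h | h
    · rcases Finset.mem_union.1 h with h' | h'
      · exact Finset.mem_union_left _ h'
      · exact hJ'sub h'
    · rcases Finset.mem_union.1 h with h' | h'
      · exact hJ'sub h'
      · exact Finset.mem_union_right _ h'

theorem hub {C : Finset V} (hCind : IsIndepFinset G C) {k : ℕ} :
    ∀ n (P Q : Finset V), P ⊆ C → Q ⊆ C → P.card = k → Q.card = k →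
      (P \ Q).card ≤ n → TJReachableWithin G k P Q C := by
  intro n
  induction n with
  | zero =>
    intro P Q hPC hQC hPcard hQcard hPQ
    have hPQ' : P ⊆ Q := by
      rw [← Finset.sdiff_eq_empty_iff_subset]
      exact Finset.card_eq_zero.1 (Nat.le_zero.1 hPQ)
    have : P = Q := Finset.eq_of_subset_of_card_le hPQ' (by rw [hPcard, hQcard])
    subst this
    exact tjrw_mono hPC (tjrw_refl (indep_subset hCind hPC) hPcard)
  | succ n ih =>
    intro P Q hPC hQC hPcard hQcard hPQ
    by_cases hPQeq : P = Q
    · subst hPQeq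
      exact tjrw_mono hPC (tjrw_refl (indep_subset hCind hPC) hPcard)
    have hPQne : (P \ Q).Nonempty := by
      rw [Finset.sdiff_nonempty]
      intro hsub
      exact hPQeq (Finset.eq_of_subset_of_card_le hsub (by rw [hPcard, hQcard]))
    obtain ⟨y, hy⟩ := hPQne
    have hQPne : (Q \ P).Nonempty := by
      rw [← Finset.card_pos, Finset.card_sdiff_comm (by rw [hQcard, hPcard])]
      rw [Finset.card_pos]
      exact ⟨y, hy⟩
    obtain ⟨c, hc⟩ := hQPne
    have hyP : y ∈ P := (Finset.mem_sdiff.1 hy).1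
    have hcP : c ∉ P := (Finset.mem_sdiff.1 hc).2
    have hcQ : c ∈ Q := (Finset.mem_sdiff.1 hc).1
    set P' := insert c (P.erase y) with hP'def
    have hP'C : P' ⊆ C := by
      intro x hx
      rcases Finset.mem_insert.1 hx with rfl | hx'
      · exact hQC hcQ
      · exact hPC (Finset.mem_of_mem_erase hx')
    have hP'card : P'.card = k := by rw [hP'def, swap_card hyP hcP, hPcard]
    have hmeas : (P' \ Q).card ≤ n := by
      have e1 : P' \ Q = (P \ Q).erase y := by
        ext x
        simp only [hP'def, Finset.mem_sdiff, Finset.mem_insert, Finset.mem_erase]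
        constructor
        · rintro ⟨rfl | ⟨hxy, hxP⟩, hxQ⟩
          · exact (hxQ hcQ).elim
          · exact ⟨hxy, hxP, hxQ⟩
        · rintro ⟨hxy, hxP, hxQ⟩
          exact ⟨Or.inr ⟨hxy, hxP⟩, hxQ⟩
      rw [e1, Finset.card_erase_of_mem hy]
      have : 0 < (P \ Q).card := Finset.card_pos.2 ⟨y, hy⟩
      omega
    have hstep : TJReachableWithin G k P P' (P ∪ P') :=
      tjrw_step (tjstep_swap hyP hcP) (indep_subset hCind hPC) hPcard
        (indep_subset hCind hP'C) hP'card
    have := tjrw_trans hstep (ih P' Q hP'C hQC hP'card hQcard hmeas)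
    refine tjrw_mono ?_ this
    intro x hx
    rcases Finset.mem_union.1 hx with h | h
    · rcases Finset.mem_union.1 h with h' | h'
      · exact hPC h'
      · exact hP'C h'
    · exact h

theorem codeg3 (hK : ¬ ContainsKpq G 3 t) {u v w : V}
    (huv : u ≠ v) (hwu : w ≠ u) (hwv : w ≠ v) :
    ((G.neighborFinset u ∩ G.neighborFinset v) ∩ G.neighborFinset w).card < t := by
  by_contra hle
  push_neg at hle
  obtain ⟨Y, hYsub, hYcard⟩ := Finset.exists_subset_card_eq hle
  apply hK
  refine ⟨{u, v, w}, Y, ?_, ?_, hYcard, ?_⟩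
  · rw [Finset.disjoint_left]
    intro x hx hxY
    have hmem := hYsub hxY
    have h3 := (Finset.mem_inter.1 hmem).2
    obtain ⟨h1, h2⟩ := Finset.mem_inter.1 (Finset.mem_inter.1 hmem).1
    rcases Finset.mem_insert.1 hx with rfl | hx'
    · exact G.loopless.irrefl _ ((SimpleGraph.mem_neighborFinset _ _ _).1 h1)
    rcases Finset.mem_insert.1 hx' with rfl | hx''
    · exact G.loopless.irrefl _ ((SimpleGraph.mem_neighborFinset _ _ _).1 h2)
    · rw [Finset.mem_singleton] at hx''
      subst hx''
      exact G.loopless.irrefl _ ((SimpleGraph.mem_neighborFinset _ _ _).1 h3)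
  · exact Finset.card_eq_three.2 ⟨u, v, w, huv, Ne.symm hwu, Ne.symm hwv, rfl⟩
  · intro x hx y hy
    have hmem := hYsub hy
    obtain ⟨h12, h3⟩ := Finset.mem_inter.1 hmem
    obtain ⟨h1, h2⟩ := Finset.mem_inter.1 h12
    rcases Finset.mem_insert.1 hx with rfl | hx'
    · exact (SimpleGraph.mem_neighborFinset _ _ _).1 h1
    rcases Finset.mem_insert.1 hx' with rfl | hx''
    · exact (SimpleGraph.mem_neighborFinset _ _ _).1 h2
    · rw [Finset.mem_singleton] at hx''
      subst hx''
      exact (SimpleGraph.mem_neighborFinset _ _ _).1 h3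

theorem hitting {𝒳 : Finset (Finset V)} {ℓ k : ℕ} {f : ℕ → Finset V}
    (hX2 : ∀ X ∈ 𝒳, X.card = 2)
    (hhit : ∀ i ≤ ℓ, ∀ X ∈ 𝒳, (f i ∩ X).Nonempty)
    (hnc : ∀ x : V, ∃ i, i ≤ ℓ ∧ x ∉ f i)
    (hfc : ∀ i ≤ ℓ, (f i).card = k) :
    𝒳.card ≤ k * k := by
  classical
  by_cases hempty : 𝒳 = ∅
  · simp [hempty]
  have hx0 : ∀ X ∈ 𝒳, (X ∩ f 0).Nonempty := fun X hX => by
    have := hhit 0 (Nat.zero_le _) X hX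
    rwa [Finset.inter_comm] at this
  obtain ⟨X₀, hX₀⟩ := Finset.nonempty_iff_ne_empty.2 hempty
  have hv₀ := hx0 X₀ hX₀
  set v₀ := hv₀.choose with hv₀def
  set g : Finset V → V := fun X => if h : (X ∩ f 0).Nonempty then h.choose else v₀ with hgdef
  have hgmem : ∀ X ∈ 𝒳, g X ∈ X ∩ f 0 := fun X hX => by
    simp only [hgdef, dif_pos (hx0 X hX)]
    exact (hx0 X hX).choose_spec
  rw [Finset.card_eq_sum_card_fiberwise (f := g) (s := 𝒳) (t := f 0)
    (fun X hX => (Finset.mem_inter.1 (hgmem X hX)).2)]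
  have hbound : ∀ x ∈ f 0, (𝒳.filter (fun X => g X = x)).card ≤ k := by
    intro x hx
    obtain ⟨ix, hix, hxf⟩ := hnc x
    set φ : Finset V → V := fun X => if h : (f ix ∩ X).Nonempty then h.choose else v₀ with hφdef
    have hφmem : ∀ X ∈ 𝒳, φ X ∈ f ix ∩ X := fun X hX => by
      simp only [hφdef, dif_pos (hhit ix hix X hX)]
      exact (hhit ix hix X hX).choose_spec
    have key : ∀ X ∈ 𝒳.filter (fun X => g X = x), X = {x, φ X} := by
      intro X hXf
      obtain ⟨hX, hgX⟩ := Finset.mem_filter.1 hXf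
      have h1 : x ∈ X := by
        have := (Finset.mem_inter.1 (hgmem X hX)).1
        rwa [hgX] at this
      have h2' : φ X ∈ X := (Finset.mem_inter.1 (hφmem X hX)).2
      have h3 : φ X ≠ x := by
        intro heq
        have := (Finset.mem_inter.1 (hφmem X hX)).1
        rw [heq] at this
        exact hxf this
      have hsub : ({x, φ X} : Finset V) ⊆ X := by
        intro z hz
        rcases Finset.mem_insert.1 hz with rfl | hz'
        · exact h1
        · rw [Finset.mem_singleton] at hz'
          subst hz'
          exact h2'
      have hcard2 : ({x, φ X} : Finset V).card = 2 := Finset.card_pair (Ne.symm h3)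
      exact (Finset.eq_of_subset_of_card_le hsub (by rw [hX2 X hX, hcard2])).symm
    calc (𝒳.filter (fun X => g X = x)).card
        ≤ (f ix).card := by
          apply Finset.card_le_card_of_injOn φ
          · intro X hXf
            exact (Finset.mem_inter.1 (hφmem X (Finset.mem_filter.1 hXf).1)).1
          · intro X hXf X' hXf' heq
            rw [key X hXf, key X' hXf', heq]
      _ = k := hfc ix hix
  calc ∑ x ∈ f 0, (𝒳.filter (fun X => g X = x)).card
      ≤ ∑ _x ∈ f 0, k := Finset.sum_le_sum hbound
    _ = (f 0).card * k := by rw [Finset.sum_const, smul_eq_mul]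
    _ = k * k := by rw [hfc 0 (Nat.zero_le _)]

end TJAux
end

namespace TJAux

def tjM1 (t k : ℕ) : ℕ := k * t + 2 * k + 1
def tjBq (t k : ℕ) : ℕ := (t + 1) * tjM1 t k + 1
def tjM2 (t k : ℕ) : ℕ := k * tjBq t k + 2 * k + 1
def tjB2 (t k : ℕ) : ℕ := tjM2 t k * (tjBq t k + 1)
def tjM3 (t k : ℕ) : ℕ := k * tjB2 t k + 2 * k + 1
def tjSMALL (t k : ℕ) : ℕ := tjM3 t k * (tjB2 t k + 1) + 2 * k + 1
def tjBase (t k : ℕ) : ℕ :=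
  tjSMALL t k + 3 * tjM1 t k + 3 * tjM2 t k + 3 * tjM3 t k + 20 * k + 20
def tjG (t : ℕ) : ℕ → ℕ
  | 0 => tjBase t 0
  | (k+1) => tjBase t (k+1) + 2 * (2 ^ (k*k+2) * tjG t k) + 2
def tjMB (t k x : ℕ) : ℕ := (2 ^ (k*k + 2 - x) - 1) * tjG t k

lemma tjG_ge_base (t k : ℕ) : tjBase t k ≤ tjG t k := by
  cases k with
  | zero => simp [tjG]
  | succ k => simp only [tjG]; omega

lemma tjG_ge_small (t k : ℕ) : tjSMALL t k ≤ tjG t k := by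
  have h := tjG_ge_base t k
  have e : tjBase t k = tjSMALL t k + 3 * tjM1 t k + 3 * tjM2 t k + 3 * tjM3 t k + 20 * k + 20 := rfl
  omega

lemma tjMB_ge_G (t k x : ℕ) (hx : x ≤ k*k+1) : tjG t k ≤ tjMB t k x := by
  have he : 1 ≤ k*k + 2 - x := by omega
  have h2 : 2 ≤ 2 ^ (k*k+2-x) := by
    calc 2 = 2 ^ 1 := rfl
    _ ≤ 2 ^ (k*k+2-x) := Nat.pow_le_pow_right (by omega) he
  calc tjG t k = 1 * tjG t k := (Nat.one_mul _).symm
  _ ≤ (2 ^ (k*k+2-x) - 1) * tjG t k := Nat.mul_le_mul_right _ (by omega)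

lemma tjMB_mono (t k : ℕ) {x y : ℕ} (h : x ≤ y) : tjMB t k y ≤ tjMB t k x := by
  apply Nat.mul_le_mul_right
  have : 2 ^ (k*k+2-y) ≤ 2 ^ (k*k+2-x) := Nat.pow_le_pow_right (by omega) (by omega)
  omega

lemma arith_base (t k x n : ℕ) (hx : x ≤ k*k+1) (hn : n ≤ tjBase t k) :
    n ≤ tjMB t k x := le_trans hn (le_trans (tjG_ge_base t k) (tjMB_ge_G t k x hx))

lemma arith_alpha (t k x n : ℕ) (hx : x ≤ k*k) (hn : n ≤ tjBase t k) :
    2 * tjMB t k (x+1) + n ≤ tjMB t k x := by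
  have he : k*k + 2 - x = (k*k + 2 - (x+1)) + 1 := by omega
  set e' := k*k + 2 - (x+1) with he'
  have h1 : 1 ≤ 2 ^ e' := Nat.one_le_two_pow
  obtain ⟨a, ha⟩ : ∃ a, 2 ^ e' = a + 1 := ⟨2 ^ e' - 1, by omega⟩
  have hpow : 2 ^ (k*k+2-x) = 2 * 2 ^ e' := by
    rw [he, pow_succ]; ring
  have hG : n ≤ tjG t k := le_trans hn (tjG_ge_base t k)
  unfold tjMB
  rw [hpow, ha]
  have e1 : (a + 1 - 1) * tjG t k = a * tjG t k := by rw [Nat.add_sub_cancel]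
  have e2 : (2 * (a + 1) - 1) * tjG t k = 2 * (a * tjG t k) + tjG t k := by
    have : 2 * (a + 1) - 1 = 2 * a + 1 := by omega
    rw [this]; ring
  rw [e1, e2]
  omega

lemma arith_strip (t k' x n : ℕ) (hx : x ≤ (k'+1)*(k'+1)+1) (hn : n ≤ tjBase t (k'+1)) :
    2 * tjMB t k' 0 + n ≤ tjMB t (k'+1) x := by
  have h1 : tjMB t k' 0 ≤ 2 ^ (k'*k'+2) * tjG t k' := by
    unfold tjMB
    simp only [Nat.sub_zero]
    exact Nat.mul_le_mul_right _ (Nat.sub_le _ _)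
  have h2 : tjG t (k'+1) = tjBase t (k'+1) + 2 * (2 ^ (k'*k'+2) * tjG t k') + 2 := rfl
  have h3 := tjMB_ge_G t (k'+1) x hx
  omega

end TJAux

namespace TJAux

set_option maxHeartbeats 1000000 in
theorem MAIN {V : Type*} [Fintype V] [DecidableEq V] {G : SimpleGraph V} [DecidableRel G.Adj]
    {t : ℕ} (hK : ¬ ContainsKpq G 3 t) :
    ∀ (k : ℕ) (m : ℕ) (𝒳 : Finset (Finset V)) (A I J : Finset V) (ℓ : ℕ) (f : ℕ → Finset V),
      𝒳.card + m = k * k + 1 →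
      (∀ X ∈ 𝒳, X.card = 2) →
      (∀ X ∈ 𝒳, ∀ a ∈ X, ∀ b ∈ X, a ≠ b →
        G.neighborFinset a ∩ G.neighborFinset b ∩ A = ∅) →
      TJSeq G k I J ℓ f →
      (∀ i ≤ ℓ, f i ⊆ A) →
      (∀ i ≤ ℓ, ∀ X ∈ 𝒳, (f i ∩ X).Nonempty) →
      ∃ W, W ⊆ A ∧ I ∪ J ⊆ W ∧ W.card ≤ tjMB t k 𝒳.card ∧ TJReachableWithin G k I J W := by
  intro k
  induction k using Nat.strong_induction_on with
  | _ k IHk =>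
  intro m
  induction m using Nat.strong_induction_on with
  | _ m IHm =>
  intro 𝒳 A I J ℓ f hm hX2 hcod hseq hA hhit
  obtain ⟨hf0, hfl, hcs, hstp⟩ := id hseq
  have hIind : IsIndepFinset G I := hf0 ▸ (hcs 0 (Nat.zero_le _)).1
  have hIcard : I.card = k := hf0 ▸ (hcs 0 (Nat.zero_le _)).2
  have hJind : IsIndepFinset G J := hfl ▸ (hcs ℓ le_rfl).1
  have hJcard : J.card = k := hfl ▸ (hcs ℓ le_rfl).2
  have hIA : I ⊆ A := hf0 ▸ hA 0 (Nat.zero_le _)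
  have hJA : J ⊆ A := hfl ▸ hA ℓ le_rfl
  have hxle : 𝒳.card ≤ k * k + 1 := by omega
  have hBaseEq : tjBase t k
      = tjSMALL t k + 3 * tjM1 t k + 3 * tjM2 t k + 3 * tjM3 t k + 20 * k + 20 := rfl
  -- Case: I = J
  by_cases hIJ : I = J
  · subst hIJ
    refine ⟨I, hIA, by simp, ?_, tjrw_refl hIind hIcard⟩
    rw [hIcard]
    exact arith_base t k _ k hxle (by omega)
  have hk1 : 1 ≤ k := by
    by_contra hk0
    have hk0' : k = 0 := by omega
    apply hIJ
    have hI0 : I = ∅ := Finset.card_eq_zero.1 (by rw [hIcard]; exact hk0')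
    have hJ0 : J = ∅ := Finset.card_eq_zero.1 (by rw [hJcard]; exact hk0')
    rw [hI0, hJ0]
  -- Case: a common vertex (strip it)
  by_cases hcom : ∃ x : V, ∀ i ≤ ℓ, x ∈ f i
  · obtain ⟨x, hx⟩ := hcom
    have hxI : x ∈ I := hf0 ▸ hx 0 (Nat.zero_le _)
    have hxJ : x ∈ J := hfl ▸ hx ℓ le_rfl
    obtain ⟨k', hkk⟩ : ∃ k', k = k' + 1 := ⟨k - 1, by omega⟩
    have hseq' : TJSeq G k' (I.erase x) (J.erase x) ℓ (fun i => (f i).erase x) :=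
      tjseq_erase (hkk ▸ hseq) hx
    have hA' : ∀ i ≤ ℓ, (f i).erase x ⊆ A.filter (fun z => z ≠ x ∧ ¬ G.Adj x z) := by
      intro i hi z hz
      refine Finset.mem_filter.2 ⟨hA i hi (Finset.mem_of_mem_erase hz),
        (Finset.mem_erase.1 hz).1, ?_⟩
      exact (hcs i hi).1 x (hx i hi) z (Finset.mem_of_mem_erase hz)
    obtain ⟨W', hW'A, hW'IJ, hW'card, hW'tj⟩ :=
      IHk k' (by omega) (k' * k' + 1) ∅ (A.filter (fun z => z ≠ x ∧ ¬ G.Adj x z))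
        (I.erase x) (J.erase x) ℓ (fun i => (f i).erase x)
        (by simp) (by simp) (by simp) hseq' hA' (by simp)
    have hWn : ∀ w ∈ W', ¬ G.Adj x w ∧ w ≠ x := by
      intro w hw
      have := Finset.mem_filter.1 (hW'A hw)
      exact ⟨this.2.2, this.2.1⟩
    have hlift := tjrw_insert hWn hW'tj
    rw [Finset.insert_erase hxI, Finset.insert_erase hxJ, ← hkk] at hlift
    refine ⟨insert x W', ?_, ?_, ?_, hlift⟩
    · exact Finset.insert_subset (hIA hxI) (hW'A.trans (Finset.filter_subset _ _))
    · apply Finset.union_subset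
      · intro z hz
        by_cases hzx : z = x
        · subst hzx; exact Finset.mem_insert_self _ _
        · exact Finset.mem_insert_of_mem
            (hW'IJ (Finset.mem_union_left _ (Finset.mem_erase.2 ⟨hzx, hz⟩)))
      · intro z hz
        by_cases hzx : z = x
        · subst hzx; exact Finset.mem_insert_self _ _
        · exact Finset.mem_insert_of_mem
            (hW'IJ (Finset.mem_union_right _ (Finset.mem_erase.2 ⟨hzx, hz⟩)))
    · have h1 := Finset.card_insert_le x W'
      have h2 : Finset.card (∅ : Finset (Finset V)) = 0 := rfl
      rw [h2] at hW'card
      have h3 := arith_strip t k' 𝒳.card (tjBase t k) (by rw [← hkk]; exact hxle)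
        (by rw [hkk])
      rw [← hkk] at h3
      have h4 : 1 ≤ tjBase t k := by omega
      omega
  -- Case: small
  by_cases hsm : A.card ≤ tjSMALL t k
  · refine ⟨A, Finset.Subset.refl A, Finset.union_subset hIA hJA, ?_, ⟨ℓ, f, hseq, hA⟩⟩
    exact arith_base t k _ _ hxle (by omega)
  have hnc : ∀ x : V, ∃ i, i ≤ ℓ ∧ x ∉ f i := by
    push_neg at hcom
    exact hcom
  -- Case b1: heavy pair
  by_cases hb1 : ∃ u v2 : V, u ≠ v2 ∧
      tjBq t k ≤ (G.neighborFinset u ∩ G.neighborFinset v2 ∩ A).card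
  · obtain ⟨u, v, huv, hBq⟩ := hb1
    set C1 := G.neighborFinset u ∩ G.neighborFinset v ∩ A with hC1def
    have hC1mem : ∀ c ∈ C1, G.Adj u c ∧ G.Adj v c ∧ c ≠ u ∧ c ≠ v := by
      intro c hc
      obtain ⟨huv', hcA⟩ := Finset.mem_inter.1 hc
      obtain ⟨hcu, hcv⟩ := Finset.mem_inter.1 huv'
      have h1 : G.Adj u c := (SimpleGraph.mem_neighborFinset _ _ _).1 hcu
      have h2 : G.Adj v c := (SimpleGraph.mem_neighborFinset _ _ _).1 hcv
      exact ⟨h1, h2, h1.ne', h2.ne'⟩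
    have hint : ∀ a ∈ C1, (G.neighborFinset a ∩ C1).card ≤ t := by
      intro a ha
      have hne := hC1mem a ha
      calc (G.neighborFinset a ∩ C1).card
          ≤ ((G.neighborFinset u ∩ G.neighborFinset v) ∩ G.neighborFinset a).card := by
            apply Finset.card_le_card
            intro z hz
            obtain ⟨hza, hzC1⟩ := Finset.mem_inter.1 hz
            exact Finset.mem_inter.2 ⟨(Finset.mem_inter.1 hzC1).1, hza⟩
        _ ≤ t := le_of_lt (codeg3 hK huv hne.2.2.1 hne.2.2.2)
    have hsz : tjM1 t k * (t + 1) ≤ C1.card := by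
      have e : tjBq t k = (t + 1) * tjM1 t k + 1 := rfl
      have e2 : (t + 1) * tjM1 t k = tjM1 t k * (t + 1) := Nat.mul_comm _ _
      omega
    obtain ⟨C, hCsub, hCind, hCcard⟩ := greedy t (tjM1 t k) C1 hint hsz
    have hCA : C ⊆ A := hCsub.trans Finset.inter_subset_right
    set X := ({u, v} : Finset V) with hXdef
    have hmemX : ∀ z, z ∈ X ↔ (z = u ∨ z = v) := by
      intro z
      simp [hXdef]
    have hCX : ∀ c ∈ C, c ∉ X := by
      intro c hc hcx
      rcases (hmemX c).1 hcx with rfl | rfl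
      · exact (hC1mem c (hCsub hc)).2.2.1 rfl
      · exact (hC1mem c (hCsub hc)).2.2.2 rfl
    have hdegC : ∀ w, w ∉ X → (G.neighborFinset w ∩ C).card ≤ t := by
      intro w hw
      have hwu : w ≠ u := fun e => hw ((hmemX w).2 (Or.inl e))
      have hwv : w ≠ v := fun e => hw ((hmemX w).2 (Or.inr e))
      calc (G.neighborFinset w ∩ C).card
          ≤ ((G.neighborFinset u ∩ G.neighborFinset v) ∩ G.neighborFinset w).card := by
            apply Finset.card_le_card
            intro z hz
            obtain ⟨hzw, hzC⟩ := Finset.mem_inter.1 hz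
            exact Finset.mem_inter.2 ⟨(Finset.mem_inter.1 (hCsub hzC)).1, hzw⟩
        _ ≤ t := le_of_lt (codeg3 hK huv hwu hwv)
    have hszflood : k * t + 2 * k < C.card := by
      rw [hCcard]
      have e : tjM1 t k = k * t + 2 * k + 1 := rfl
      omega
    have hfloodP : ∀ P : Finset V, IsIndepFinset G P → P.card = k → (∀ z ∈ P, z ∉ X) →
        ∃ F, F ⊆ C ∧ F.card = k ∧ TJReachableWithin G k P F (P ∪ C) :=
      fun P h1 h2 h3 => flood hCind hCX hdegC hszflood (P \ C).card P le_rfl h1 h2 h3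
    have havoidC : ∀ P : Finset V, IsIndepFinset G P → (P ∩ X).Nonempty →
        ∀ z ∈ P, z ∉ C1 := by
      rintro P hPind ⟨z0, hz0⟩ z hz hzC1
      obtain ⟨hz0f, hz0X⟩ := Finset.mem_inter.1 hz0
      have hadj : G.Adj z0 z := by
        rcases (hmemX z0).1 hz0X with rfl | rfl
        · exact (hC1mem z hzC1).1
        · exact (hC1mem z hzC1).2.1
      exact hPind z0 hz0f z hz hadj
    have hXfresh : X ∉ 𝒳 := by
      intro hmem
      have h0 := hcod X hmem u ((hmemX u).2 (Or.inl rfl)) v ((hmemX v).2 (Or.inr rfl)) huv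
      rw [← hC1def] at h0
      rw [h0] at hBq
      have e : tjBq t k = (t + 1) * tjM1 t k + 1 := rfl
      simp at hBq
      omega
    have hcard𝒳' : (insert X 𝒳).card = 𝒳.card + 1 := Finset.card_insert_of_notMem hXfresh
    have hX2' : ∀ X' ∈ insert X 𝒳, X'.card = 2 := by
      intro X' hX'
      rcases Finset.mem_insert.1 hX' with rfl | hold
      · exact Finset.card_pair huv
      · exact hX2 X' hold
    have hcod' : ∀ X' ∈ insert X 𝒳, ∀ a ∈ X', ∀ b ∈ X', a ≠ b →
        G.neighborFinset a ∩ G.neighborFinset b ∩ (A \ C1) = ∅ := by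
      intro X' hX' a ha b hb hab
      rcases Finset.mem_insert.1 hX' with rfl | hold
      · rw [Finset.eq_empty_iff_forall_notMem]
        intro z hz
        obtain ⟨hzab, hzA'⟩ := Finset.mem_inter.1 hz
        obtain ⟨hza, hzb⟩ := Finset.mem_inter.1 hzab
        have hzC1 : z ∈ C1 := by
          rcases (hmemX a).1 ha with rfl | rfl <;> rcases (hmemX b).1 hb with rfl | rfl
          · exact absurd rfl hab
          · exact Finset.mem_inter.2 ⟨Finset.mem_inter.2 ⟨hza, hzb⟩,
              (Finset.mem_sdiff.1 hzA').1⟩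
          · exact Finset.mem_inter.2 ⟨Finset.mem_inter.2 ⟨hzb, hza⟩,
              (Finset.mem_sdiff.1 hzA').1⟩
          · exact absurd rfl hab
        exact (Finset.mem_sdiff.1 hzA').2 hzC1
      · rw [Finset.eq_empty_iff_forall_notMem]
        intro z hz
        obtain ⟨hzab, hzA'⟩ := Finset.mem_inter.1 hz
        have : z ∈ G.neighborFinset a ∩ G.neighborFinset b ∩ A :=
          Finset.mem_inter.2 ⟨hzab, (Finset.mem_sdiff.1 hzA').1⟩
        rw [hcod X' hold a ha b hb hab] at this
        exact Finset.notMem_empty z this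
    have hxcount : 𝒳.card ≤ k * k := hitting hX2 hhit hnc (fun i hi => (hcs i hi).2)
    have hm1 : 1 ≤ m := by omega
    by_cases hfree : ∃ i, i ≤ ℓ ∧ f i ∩ X = ∅
    · -- α case: sides reach the buffer
      have side : ∀ (P Q : Finset V) (L : ℕ) (g : ℕ → Finset V),
          TJSeq G k P Q L g → (∀ i ≤ L, g i ⊆ A) →
          (∀ i ≤ L, ∀ X' ∈ 𝒳, (g i ∩ X').Nonempty) →
          (∃ i, i ≤ L ∧ g i ∩ X = ∅) →
          ∃ F W₁, F ⊆ C ∧ F.card = k ∧ TJReachableWithin G k P F W₁ ∧ W₁ ⊆ A ∧ P ⊆ W₁ ∧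
            W₁.card ≤ tjMB t k (𝒳.card + 1) + tjM1 t k + 4 * k := by
        intro P Q L g hgseq hgA hghit hgfree
        obtain ⟨hg0, hgL, hgcs, hgstp⟩ := id hgseq
        have hPcard : P.card = k := hg0 ▸ (hgcs 0 (Nat.zero_le _)).2
        set S := (Finset.range (L+1)).filter (fun i => g i ∩ X = ∅) with hSdef
        have hSne : S.Nonempty := by
          obtain ⟨i, hi1, hi2⟩ := hgfree
          exact ⟨i, Finset.mem_filter.2 ⟨Finset.mem_range.2 (by omega), hi2⟩⟩
        set i0 := S.min' hSne with hi0def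
        have hi0mem := S.min'_mem hSne
        have hi0le : i0 ≤ L := by
          have := (Finset.mem_filter.1 hi0mem).1
          rw [Finset.mem_range] at this
          omega
        have hi0free : g i0 ∩ X = ∅ := (Finset.mem_filter.1 hi0mem).2
        have hi0occ : ∀ i, i < i0 → (g i ∩ X).Nonempty := by
          intro i hlt
          rw [Finset.nonempty_iff_ne_empty]
          intro hemp
          have hiS : i ∈ S := Finset.mem_filter.2 ⟨Finset.mem_range.2 (by omega), hemp⟩
          have := S.min'_le i hiS
          omega
        have hfree0 : ∀ z ∈ g i0, z ∉ X := by
          intro z hz hzx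
          have : z ∈ g i0 ∩ X := Finset.mem_inter.2 ⟨hz, hzx⟩
          rw [hi0free] at this
          exact Finset.notMem_empty z this
        obtain ⟨F, hFC, hFcard, hFtj⟩ :=
          hfloodP (g i0) (hgcs i0 hi0le).1 (hgcs i0 hi0le).2 hfree0
        by_cases hi00 : i0 = 0
        · refine ⟨F, P ∪ C, hFC, hFcard, ?_, Finset.union_subset (hg0 ▸ hgA 0 (Nat.zero_le _)) hCA,
            Finset.subset_union_left, ?_⟩
          · rw [hi00, hg0] at hFtj
            exact hFtj
          · calc (P ∪ C).card ≤ P.card + C.card := Finset.card_union_le _ _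
              _ = k + tjM1 t k := by rw [hPcard, hCcard]
              _ ≤ tjMB t k (𝒳.card + 1) + tjM1 t k + 4 * k := by omega
        · have hpre : TJSeq G k P (g (i0-1)) (i0-1) g := tjseq_prefix hgseq (by omega)
          have hpreA : ∀ i ≤ i0-1, g i ⊆ A \ C1 := by
            intro i hi z hz
            have hiL : i ≤ L := by omega
            refine Finset.mem_sdiff.2 ⟨hgA i hiL hz, ?_⟩
            exact havoidC (g i) (hgcs i hiL).1 (hi0occ i (by omega)) z hz
          have hprehit : ∀ i ≤ i0-1, ∀ X' ∈ insert X 𝒳, (g i ∩ X').Nonempty := by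
            intro i hi X' hX'
            rcases Finset.mem_insert.1 hX' with rfl | hold
            · exact hi0occ i (by omega)
            · exact hghit i (by omega) X' hold
          obtain ⟨W1', hW1A, hW1IJ, hW1card, hW1tj⟩ :=
            IHm (m-1) (by omega) (insert X 𝒳) (A \ C1) P (g (i0-1)) (i0-1) g
              (by rw [hcard𝒳']; omega) hX2' hcod' hpre hpreA hprehit
          have hstep1 : TJStep (g (i0-1)) (g i0) := by
            have h := hgstp (i0-1) (by omega)
            have e : i0 - 1 + 1 = i0 := by omega
            rwa [e] at h
          have hstep1' := tjrw_step hstep1 (hgcs (i0-1) (by omega)).1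
            (hgcs (i0-1) (by omega)).2 (hgcs i0 hi0le).1 (hgcs i0 hi0le).2
          have hcomb := tjrw_trans (tjrw_trans hW1tj hstep1') hFtj
          refine ⟨F, _, hFC, hFcard, hcomb, ?_, ?_, ?_⟩
          · apply Finset.union_subset
            apply Finset.union_subset
            · exact hW1A.trans (Finset.sdiff_subset)
            · exact Finset.union_subset (hgA (i0-1) (by omega)) (hgA i0 hi0le)
            · exact Finset.union_subset (hgA i0 hi0le) hCA
          · intro z hz
            exact Finset.mem_union_left _ (Finset.mem_union_left _
              (hW1IJ (Finset.mem_union_left _ hz)))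
          · have c1 := Finset.card_union_le (W1' ∪ (g (i0-1) ∪ g i0)) (g i0 ∪ C)
            have c2 := Finset.card_union_le W1' (g (i0-1) ∪ g i0)
            have c3 := Finset.card_union_le (g (i0-1)) (g i0)
            have c4 := Finset.card_union_le (g i0) C
            have e1 : (g (i0-1)).card = k := (hgcs (i0-1) (by omega)).2
            have e2 : (g i0).card = k := (hgcs i0 hi0le).2
            rw [hcard𝒳'] at hW1card
            rw [hCcard] at c4
            omega
      have hside1 := side I J ℓ f hseq hA (fun i hi X' hX' => hhit i hi X' hX') hfree
      have hside2 := side J I ℓ (fun i => f (ℓ - i)) (tjseq_rev hseq)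
        (fun i _ => hA (ℓ - i) (by omega))
        (fun i _ X' hX' => hhit (ℓ - i) (by omega) X' hX')
        (by
          obtain ⟨i, hi1, hi2⟩ := hfree
          refine ⟨ℓ - i, by omega, ?_⟩
          show f (ℓ - (ℓ - i)) ∩ X = ∅
          rw [show ℓ - (ℓ - i) = i by omega]
          exact hi2)
      obtain ⟨F₁, W₁, hF1C, hF1card, hTJ1, hW1A, hIW1, hW1card⟩ := hside1
      obtain ⟨F₂, W₂, hF2C, hF2card, hTJ2, hW2A, hJW2, hW2card⟩ := hside2
      have hhubtj := hub hCind ((F₁ \ F₂).card) F₁ F₂ hF1C hF2C hF1card hF2card le_rfl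
      have htotal := tjrw_trans (tjrw_trans hTJ1 hhubtj) (tjrw_symm hTJ2)
      refine ⟨W₁ ∪ C ∪ W₂, ?_, ?_, ?_, htotal⟩
      · exact Finset.union_subset (Finset.union_subset hW1A hCA) hW2A
      · exact Finset.union_subset
          (fun z hz => Finset.mem_union_left _ (Finset.mem_union_left _ (hIW1 hz)))
          (fun z hz => Finset.mem_union_right _ (hJW2 hz))
      · have c1 := Finset.card_union_le (W₁ ∪ C) W₂
        have c2 := Finset.card_union_le W₁ C
        have halpha := arith_alpha t k 𝒳.card (tjBase t k) hxcount le_rfl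
        rw [hCcard] at c2
        omega
    · -- β case: the whole sequence is occupied, descend
      have hocc : ∀ i ≤ ℓ, (f i ∩ X).Nonempty := by
        push_neg at hfree
        intro i hi
        rw [Finset.nonempty_iff_ne_empty]
        exact Finset.nonempty_iff_ne_empty.1 (hfree i hi)
      have hseqA' : ∀ i ≤ ℓ, f i ⊆ A \ C1 := by
        intro i hi z hz
        refine Finset.mem_sdiff.2 ⟨hA i hi hz, ?_⟩
        exact havoidC (f i) (hcs i hi).1 (hocc i hi) z hz
      have hhit' : ∀ i ≤ ℓ, ∀ X' ∈ insert X 𝒳, (f i ∩ X').Nonempty := by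
        intro i hi X' hX'
        rcases Finset.mem_insert.1 hX' with rfl | hold
        · exact hocc i hi
        · exact hhit i hi X' hold
      obtain ⟨W, hWA, hWIJ, hWcard, hWtj⟩ :=
        IHm (m-1) (by omega) (insert X 𝒳) (A \ C1) I J ℓ f
          (by rw [hcard𝒳']; omega) hX2' hcod' hseq hseqA' hhit'
      refine ⟨W, hWA.trans Finset.sdiff_subset, hWIJ, ?_, hWtj⟩
      rw [hcard𝒳'] at hWcard
      exact le_trans hWcard (tjMB_mono t k (by omega))
  -- Case b2: heavy vertex
  by_cases hb2 : ∃ h0 : V, tjB2 t k ≤ (G.neighborFinset h0 ∩ A).card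
  · obtain ⟨h0, hB2⟩ := hb2
    push_neg at hb1
    set C1 := G.neighborFinset h0 ∩ A with hC1def
    have hC1mem : ∀ c ∈ C1, G.Adj h0 c ∧ c ≠ h0 := by
      intro c hc
      obtain ⟨hc1, _⟩ := Finset.mem_inter.1 hc
      have h1 : G.Adj h0 c := (SimpleGraph.mem_neighborFinset _ _ _).1 hc1
      exact ⟨h1, h1.ne'⟩
    have hint : ∀ a ∈ C1, (G.neighborFinset a ∩ C1).card ≤ tjBq t k := by
      intro a ha
      calc (G.neighborFinset a ∩ C1).card
          ≤ (G.neighborFinset a ∩ G.neighborFinset h0 ∩ A).card := by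
            apply Finset.card_le_card
            intro z hz
            obtain ⟨hza, hzC1⟩ := Finset.mem_inter.1 hz
            obtain ⟨hzh, hzA⟩ := Finset.mem_inter.1 hzC1
            exact Finset.mem_inter.2 ⟨Finset.mem_inter.2 ⟨hza, hzh⟩, hzA⟩
        _ ≤ tjBq t k := le_of_lt (hb1 a h0 (hC1mem a ha).2)
    have hsz : tjM2 t k * (tjBq t k + 1) ≤ C1.card := by
      have e : tjB2 t k = tjM2 t k * (tjBq t k + 1) := rfl
      omega
    obtain ⟨C, hCsub, hCind, hCcard⟩ := greedy (tjBq t k) (tjM2 t k) C1 hint hsz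
    have hCA : C ⊆ A := hCsub.trans Finset.inter_subset_right
    have hCX : ∀ c ∈ C, c ∉ ({h0} : Finset V) := by
      intro c hc hcx
      rw [Finset.mem_singleton] at hcx
      exact (hC1mem c (hCsub hc)).2 hcx
    have hdegC : ∀ w, w ∉ ({h0} : Finset V) → (G.neighborFinset w ∩ C).card ≤ tjBq t k := by
      intro w hw
      have hwh : w ≠ h0 := by
        intro e; exact hw (by rw [e]; exact Finset.mem_singleton_self _)
      calc (G.neighborFinset w ∩ C).card
          ≤ (G.neighborFinset w ∩ G.neighborFinset h0 ∩ A).card := by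
            apply Finset.card_le_card
            intro z hz
            obtain ⟨hzw, hzC⟩ := Finset.mem_inter.1 hz
            obtain ⟨hzh, hzA⟩ := Finset.mem_inter.1 (hCsub hzC)
            exact Finset.mem_inter.2 ⟨Finset.mem_inter.2 ⟨hzw, hzh⟩, hzA⟩
        _ ≤ tjBq t k := le_of_lt (hb1 w h0 hwh)
    have hszflood : k * tjBq t k + 2 * k < C.card := by
      rw [hCcard]
      have e : tjM2 t k = k * tjBq t k + 2 * k + 1 := rfl
      omega
    have hfloodP : ∀ P : Finset V, IsIndepFinset G P → P.card = k →
        (∀ z ∈ P, z ∉ ({h0} : Finset V)) →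
        ∃ F, F ⊆ C ∧ F.card = k ∧ TJReachableWithin G k P F (P ∪ C) :=
      fun P h1 h2 h3 => flood hCind hCX hdegC hszflood (P \ C).card P le_rfl h1 h2 h3
    obtain ⟨k', hkk⟩ : ∃ k', k = k' + 1 := ⟨k - 1, by omega⟩
    have side : ∀ (P Q : Finset V) (L : ℕ) (g : ℕ → Finset V),
        TJSeq G k P Q L g → (∀ i ≤ L, g i ⊆ A) →
        (∃ i, i ≤ L ∧ h0 ∉ g i) →
        ∃ F W₁, F ⊆ C ∧ F.card = k ∧ TJReachableWithin G k P F W₁ ∧ W₁ ⊆ A ∧ P ⊆ W₁ ∧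
          W₁.card ≤ tjMB t k' 0 + tjM2 t k + 6 * k + 2 := by
      intro P Q L g hgseq hgA hgfree
      obtain ⟨hg0, hgL, hgcs, hgstp⟩ := id hgseq
      have hPcard : P.card = k := hg0 ▸ (hgcs 0 (Nat.zero_le _)).2
      have hPA : P ⊆ A := hg0 ▸ hgA 0 (Nat.zero_le _)
      by_cases hh0P : h0 ∈ P
      · set S := (Finset.range (L+1)).filter (fun i => h0 ∉ g i) with hSdef
        have hSne : S.Nonempty := by
          obtain ⟨i, hi1, hi2⟩ := hgfree
          exact ⟨i, Finset.mem_filter.2 ⟨Finset.mem_range.2 (by omega), hi2⟩⟩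
        set i0 := S.min' hSne with hi0def
        have hi0mem := S.min'_mem hSne
        have hi0le : i0 ≤ L := by
          have := (Finset.mem_filter.1 hi0mem).1
          rw [Finset.mem_range] at this
          omega
        have hi0not : h0 ∉ g i0 := (Finset.mem_filter.1 hi0mem).2
        have hi0in : ∀ i, i < i0 → h0 ∈ g i := by
          intro i hlt
          by_contra hnot
          have hiS : i ∈ S := Finset.mem_filter.2 ⟨Finset.mem_range.2 (by omega), hnot⟩
          have := S.min'_le i hiS
          omega
        have hi00 : i0 ≠ 0 := by
          intro e
          rw [e, hg0] at hi0not
          exact hi0not hh0P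
        have hpre : TJSeq G k P (g (i0-1)) (i0-1) g := tjseq_prefix hgseq (by omega)
        have hh : ∀ i ≤ i0-1, h0 ∈ g i := fun i hi => hi0in i (by omega)
        have hers : TJSeq G k' (P.erase h0) ((g (i0-1)).erase h0) (i0-1)
            (fun i => (g i).erase h0) := tjseq_erase (hkk ▸ hpre) hh
        have hersA : ∀ i ≤ i0-1, (g i).erase h0
            ⊆ A.filter (fun z => z ≠ h0 ∧ ¬ G.Adj h0 z) := by
          intro i hi z hz
          have hiL : i ≤ L := by omega
          refine Finset.mem_filter.2 ⟨hgA i hiL (Finset.mem_of_mem_erase hz),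
            (Finset.mem_erase.1 hz).1, ?_⟩
          exact (hgcs i hiL).1 h0 (hh i hi) z (Finset.mem_of_mem_erase hz)
        obtain ⟨W1', hW1A, hW1IJ, hW1card, hW1tj⟩ :=
          IHk k' (by omega) (k' * k' + 1) ∅ (A.filter (fun z => z ≠ h0 ∧ ¬ G.Adj h0 z))
            (P.erase h0) ((g (i0-1)).erase h0) (i0-1) (fun i => (g i).erase h0)
            (by simp) (by simp) (by simp) hers hersA (by simp)
        have hWn : ∀ w ∈ W1', ¬ G.Adj h0 w ∧ w ≠ h0 := by
          intro w hw
          have := Finset.mem_filter.1 (hW1A hw)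
          exact ⟨this.2.2, this.2.1⟩
        have hlift := tjrw_insert hWn hW1tj
        rw [Finset.insert_erase hh0P, Finset.insert_erase (hh (i0-1) le_rfl), ← hkk] at hlift
        have hstep1 : TJStep (g (i0-1)) (g i0) := by
          have h := hgstp (i0-1) (by omega)
          have e : i0 - 1 + 1 = i0 := by omega
          rwa [e] at h
        have hstep1' := tjrw_step hstep1 (hgcs (i0-1) (by omega)).1
          (hgcs (i0-1) (by omega)).2 (hgcs i0 hi0le).1 (hgcs i0 hi0le).2
        have hfr : ∀ z ∈ g i0, z ∉ ({h0} : Finset V) := by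
          intro z hz hze
          rw [Finset.mem_singleton] at hze
          subst hze
          exact hi0not hz
        obtain ⟨F, hFC, hFcard, hFtj⟩ :=
          hfloodP (g i0) (hgcs i0 hi0le).1 (hgcs i0 hi0le).2 hfr
        have hcomb := tjrw_trans (tjrw_trans hlift hstep1') hFtj
        refine ⟨F, _, hFC, hFcard, hcomb, ?_, ?_, ?_⟩
        · apply Finset.union_subset
          apply Finset.union_subset
          · exact Finset.insert_subset (hPA hh0P)
              (hW1A.trans (Finset.filter_subset _ _))
          · exact Finset.union_subset (hgA (i0-1) (by omega)) (hgA i0 hi0le)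
          · exact Finset.union_subset (hgA i0 hi0le) hCA
        · intro z hz
          apply Finset.mem_union_left
          apply Finset.mem_union_left
          by_cases hzh : z = h0
          · subst hzh; exact Finset.mem_insert_self _ _
          · exact Finset.mem_insert_of_mem
              (hW1IJ (Finset.mem_union_left _ (Finset.mem_erase.2 ⟨hzh, hz⟩)))
        · have c1 := Finset.card_union_le (insert h0 W1' ∪ (g (i0-1) ∪ g i0)) (g i0 ∪ C)
          have c2 := Finset.card_union_le (insert h0 W1') (g (i0-1) ∪ g i0)
          have c3 := Finset.card_union_le (g (i0-1)) (g i0)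
          have c4 := Finset.card_union_le (g i0) C
          have c5 := Finset.card_insert_le h0 W1'
          have e1 : (g (i0-1)).card = k := (hgcs (i0-1) (by omega)).2
          have e2 : (g i0).card = k := (hgcs i0 hi0le).2
          have e3 : Finset.card (∅ : Finset (Finset V)) = 0 := rfl
          rw [e3] at hW1card
          rw [hCcard] at c4
          omega
      · have hfr : ∀ z ∈ P, z ∉ ({h0} : Finset V) := by
          intro z hz hze
          rw [Finset.mem_singleton] at hze
          subst hze
          exact hh0P hz
        obtain ⟨F, hFC, hFcard, hFtj⟩ :=
          hfloodP P (hg0 ▸ (hgcs 0 (Nat.zero_le _)).1) hPcard hfr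
        refine ⟨F, P ∪ C, hFC, hFcard, hFtj, Finset.union_subset hPA hCA,
          Finset.subset_union_left, ?_⟩
        calc (P ∪ C).card ≤ P.card + C.card := Finset.card_union_le _ _
          _ = k + tjM2 t k := by rw [hPcard, hCcard]
          _ ≤ tjMB t k' 0 + tjM2 t k + 6 * k + 2 := by omega
    have hside1 := side I J ℓ f hseq hA (by
      obtain ⟨i, hi1, hi2⟩ := hnc h0
      exact ⟨i, hi1, hi2⟩)
    have hside2 := side J I ℓ (fun i => f (ℓ - i)) (tjseq_rev hseq)
      (fun i _ => hA (ℓ - i) (by omega))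
      (by
        obtain ⟨i, hi1, hi2⟩ := hnc h0
        refine ⟨ℓ - i, by omega, ?_⟩
        show h0 ∉ f (ℓ - (ℓ - i))
        rw [show ℓ - (ℓ - i) = i by omega]
        exact hi2)
    obtain ⟨F₁, W₁, hF1C, hF1card, hTJ1, hW1A, hIW1, hW1card⟩ := hside1
    obtain ⟨F₂, W₂, hF2C, hF2card, hTJ2, hW2A, hJW2, hW2card⟩ := hside2
    have hhubtj := hub hCind ((F₁ \ F₂).card) F₁ F₂ hF1C hF2C hF1card hF2card le_rfl
    have htotal := tjrw_trans (tjrw_trans hTJ1 hhubtj) (tjrw_symm hTJ2)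
    refine ⟨W₁ ∪ C ∪ W₂, ?_, ?_, ?_, htotal⟩
    · exact Finset.union_subset (Finset.union_subset hW1A hCA) hW2A
    · exact Finset.union_subset
        (fun z hz => Finset.mem_union_left _ (Finset.mem_union_left _ (hIW1 hz)))
        (fun z hz => Finset.mem_union_right _ (hJW2 hz))
    · have c1 := Finset.card_union_le (W₁ ∪ C) W₂
      have c2 := Finset.card_union_le W₁ C
      have hstrip := arith_strip t k' 𝒳.card (tjBase t k) (by rw [← hkk]; exact hxle)
        (by rw [hkk])
      rw [← hkk] at hstrip
      rw [hCcard] at c2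
      omega
  -- Case b3: bounded degrees, flood everything
  · push_neg at hb2
    set A2 := A \ (I ∪ J) with hA2def
    have hszA2 : tjM3 t k * (tjB2 t k + 1) ≤ A2.card := by
      have h1 : A ⊆ A2 ∪ (I ∪ J) := by
        intro z hz
        by_cases hzIJ : z ∈ I ∪ J
        · exact Finset.mem_union_right _ hzIJ
        · exact Finset.mem_union_left _ (Finset.mem_sdiff.2 ⟨hz, hzIJ⟩)
      have h2 := (Finset.card_le_card h1).trans (Finset.card_union_le _ _)
      have h3 := Finset.card_union_le I J
      have e : tjSMALL t k = tjM3 t k * (tjB2 t k + 1) + 2 * k + 1 := rfl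
      omega
    have hint : ∀ a ∈ A2, (G.neighborFinset a ∩ A2).card ≤ tjB2 t k := by
      intro a _
      calc (G.neighborFinset a ∩ A2).card
          ≤ (G.neighborFinset a ∩ A).card :=
            Finset.card_le_card (Finset.inter_subset_inter (le_refl _) Finset.sdiff_subset)
        _ ≤ tjB2 t k := le_of_lt (hb2 a)
    obtain ⟨C, hCsub, hCind, hCcard⟩ := greedy (tjB2 t k) (tjM3 t k) A2 hint hszA2
    have hCA : C ⊆ A := hCsub.trans Finset.sdiff_subset
    have hCX : ∀ c ∈ C, c ∉ (∅ : Finset V) := fun c _ h => Finset.notMem_empty c h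
    have hdegC : ∀ w, w ∉ (∅ : Finset V) → (G.neighborFinset w ∩ C).card ≤ tjB2 t k := by
      intro w _
      calc (G.neighborFinset w ∩ C).card
          ≤ (G.neighborFinset w ∩ A).card :=
            Finset.card_le_card (Finset.inter_subset_inter (le_refl _) hCA)
        _ ≤ tjB2 t k := le_of_lt (hb2 w)
    have hszflood : k * tjB2 t k + 2 * k < C.card := by
      rw [hCcard]
      have e : tjM3 t k = k * tjB2 t k + 2 * k + 1 := rfl
      omega
    have hnotin : ∀ (P : Finset V), ∀ z ∈ P, z ∉ (∅ : Finset V) :=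
      fun P z _ h => Finset.notMem_empty z h
    obtain ⟨F₁, hF1C, hF1card, hTJ1⟩ :=
      flood hCind hCX hdegC hszflood (I \ C).card I le_rfl hIind hIcard (hnotin I)
    obtain ⟨F₂, hF2C, hF2card, hTJ2⟩ :=
      flood hCind hCX hdegC hszflood (J \ C).card J le_rfl hJind hJcard (hnotin J)
    have hhubtj := hub hCind ((F₁ \ F₂).card) F₁ F₂ hF1C hF2C hF1card hF2card le_rfl
    have htotal := tjrw_trans (tjrw_trans hTJ1 hhubtj) (tjrw_symm hTJ2)
    refine ⟨(I ∪ C) ∪ C ∪ (J ∪ C), ?_, ?_, ?_, htotal⟩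
    · exact Finset.union_subset (Finset.union_subset (Finset.union_subset hIA hCA) hCA)
        (Finset.union_subset hJA hCA)
    · exact Finset.union_subset
        (fun z hz => Finset.mem_union_left _ (Finset.mem_union_left _
          (Finset.mem_union_left _ hz)))
        (fun z hz => Finset.mem_union_right _ (Finset.mem_union_left _ hz))
    · have c1 := Finset.card_union_le ((I ∪ C) ∪ C) (J ∪ C)
      have c2 := Finset.card_union_le (I ∪ C) C
      have c3 := Finset.card_union_le I C
      have c4 := Finset.card_union_le J C
      have harith := arith_base t k 𝒳.card (tjBase t k) hxle le_rfl
      rw [hCcard] at c3 c4 c2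
      omega

end TJAux

/-- kernelization for `K_{3,t}`-forbidden graphs: there is a
function `f` of the number `k` of tokens so that reconfigurability is preserved
on some induced subgraph of at most `f k` vertices containing `I₀ ∪ Iᵣ`. -/
theorem k3t_kernel_exists (t : ℕ) (ht : 3 ≤ t) :
    ∃ f : ℕ → ℕ,
      ∀ (V : Type) [Fintype V] [DecidableEq V] (G : SimpleGraph V),
        ¬ ContainsKpq G 3 t →
        ∀ (k : ℕ) (I0 Ir : Finset V),
          IsIndepFinset G I0 → IsIndepFinset G Ir →
          I0.card = k → Ir.card = k →
          ∃ V' : Finset V, I0 ∪ Ir ⊆ V' ∧ V'.card ≤ f k ∧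
            (TJReachable G k I0 Ir ↔ TJReachableWithin G k I0 Ir V') := by
  refine ⟨fun k => 2 ^ (k * k + 2) * TJAux.tjG t k, ?_⟩
  intro V _ _ G hK k I0 Ir hI0 hIr hc0 hcr
  letI : DecidableRel G.Adj := Classical.decRel _
  have hGbound : ∀ n : ℕ, n ≤ TJAux.tjBase t k → n ≤ 2 ^ (k * k + 2) * TJAux.tjG t k := by
    intro n hn
    calc n ≤ TJAux.tjBase t k := hn
      _ ≤ TJAux.tjG t k := TJAux.tjG_ge_base t k
      _ ≤ 2 ^ (k * k + 2) * TJAux.tjG t k :=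
          Nat.le_mul_of_pos_left _ (Nat.pow_pos (by omega))
  by_cases hr : TJReachable G k I0 Ir
  · obtain ⟨ℓ, f, hseq⟩ := hr
    obtain ⟨W, hWA, hWIJ, hWcard, hWtj⟩ :=
      TJAux.MAIN hK k (k * k + 1) ∅ Finset.univ I0 Ir ℓ f
        (by simp) (by simp) (by simp) hseq (fun i _ => Finset.subset_univ _) (by simp)
    refine ⟨W, hWIJ, ?_, ?_⟩
    · have e0 : Finset.card (∅ : Finset (Finset V)) = 0 := rfl
      rw [e0] at hWcard
      have e1 : TJAux.tjMB t k 0 = (2 ^ (k * k + 2) - 1) * TJAux.tjG t k := by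
        unfold TJAux.tjMB
        rw [Nat.sub_zero]
      calc W.card ≤ TJAux.tjMB t k 0 := hWcard
        _ ≤ 2 ^ (k * k + 2) * TJAux.tjG t k := by
            rw [e1]
            exact Nat.mul_le_mul_right _ (Nat.sub_le _ _)
    · exact ⟨fun _ => hWtj, fun _ => ⟨ℓ, f, hseq⟩⟩
  · refine ⟨I0 ∪ Ir, Finset.Subset.refl _, ?_, ?_⟩
    · have h1 := Finset.card_union_le I0 Ir
      have h2 : 2 * k ≤ TJAux.tjBase t k := by
        have e : TJAux.tjBase t k = TJAux.tjSMALL t k + 3 * TJAux.tjM1 t k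
            + 3 * TJAux.tjM2 t k + 3 * TJAux.tjM3 t k + 20 * k + 20 := rfl
        omega
      have h3 := hGbound (2 * k) h2
      show (I0 ∪ Ir).card ≤ 2 ^ (k * k + 2) * TJAux.tjG t k
      omega
    · constructor
      · intro h
        exact absurd h hr
      · rintro ⟨ℓ, f, hs, _⟩
        exact absurd ⟨ℓ, f, hs⟩ hr
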